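/- In the non-associative Hopf algebra k{{x,y}}, the element τ^{exp_l(x)}(y) := exp_l(x)\ d/ds|_{s=0} exp_l(x+sy) has degree-n component in x equal to Σ_{i=1}^{n} (1/(n+1))·(1/(n−i)!)·⟨x^{n−i}; x, τ_{i−1}⟩, where τ_0 = y and τ_j denotes the degree-j component; in particular τ_1 = (1/2)⟨x, y⟩ = −(1/2)[x,y]. -/

import Mathlib

/- STATEMENT 9: in k{{x,y}}, the degree-n component (in x) of
τ^{exp_l(x)}(y) := exp_l(x) \ d/ds|₀ exp_l(x+sy)  satisfies
τ_n = Σ_{i=1}^{n} (1/(n+1))·(1/(n−i)!)·⟨x^{n−i}; x, τ_{i−1}⟩  with τ₀ = y; in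
particular τ₁ = ½⟨x,y⟩ = −½[x,y].  Here x, y are the primitive generators of the free
unital non-associative algebra, ⟨·;·,·⟩ is the Shestakov–Umirbaev operation
(characterized by (w a)b − (w b)a = −Σ w₍₁₎⟨w₍₂₎; a, b⟩, with ⟨1; a, b⟩ = −[a,b]),
and, writing y∂_x for the derivation with x ↦ y, y ↦ 0, the degree-n component of
τ^{exp_l(x)}(y) = γ_{y∂_x}(exp_l(x)) is τ_n = (1/(n+1)!)·γ_{y∂_x}(x^{n+1}) where
γ_d(u) = Σ u₍₁₎ \ d(u₍₂₎) and x^{n+1} is the left-normed power. -/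

open TensorProduct

noncomputable section

variable (K : Type*) [Field K] [CharZero K]

/-- The free unital non-associative algebra on two generators x, y. -/
abbrev F2 := MonoidAlgebra K (WithOne (FreeMagma (Fin 2)))

def gen2 (i : Fin 2) : F2 K :=
  MonoidAlgebra.single (↑(FreeMagma.of i) : WithOne (FreeMagma (Fin 2))) 1

/-- Left-normed powers: a⁰ = 1, a^{n+1} = aⁿ·a. -/
def lpow (a : F2 K) : ℕ → F2 K
  | 0 => 1
  | n + 1 => lpow a n * a

/-- `γ_d(u) = Σ u₍₁₎ \ d(u₍₂₎)`. -/
def gammaD (Δ : F2 K →ₗ[K] F2 K ⊗[K] F2 K)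
    (ldiv : F2 K →ₗ[K] F2 K →ₗ[K] F2 K) (d : F2 K →ₗ[K] F2 K) :
    F2 K →ₗ[K] F2 K :=
  (TensorProduct.lift (ldiv.compl₂ d)).comp Δ

/-! ### Auxiliary combinatorial lemmas -/

open Finset

set_option linter.unusedSectionVars false
set_option linter.unusedTactic false
set_option linter.unreachableTactic false
set_option linter.unusedVariables false

theorem aux_tri_diag {M : Type*} [AddCommMonoid M] (m : ℕ) (f : ℕ → ℕ → M) :
    ∑ a ∈ range (m+1), ∑ j ∈ range (a+1), f j (a - j)
      = ∑ j ∈ range (m+1), ∑ p ∈ range (m + 1 - j), f j p := by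
  rw [Finset.sum_sigma', Finset.sum_sigma']
  refine Finset.sum_nbij'
    (fun x : (_ : ℕ) × ℕ => (⟨x.2, x.1 - x.2⟩ : (_ : ℕ) × ℕ))
    (fun x : (_ : ℕ) × ℕ => (⟨x.1 + x.2, x.1⟩ : (_ : ℕ) × ℕ)) ?_ ?_ ?_ ?_ ?_ <;>
    simp only [Finset.mem_sigma, Finset.mem_range, Sigma.forall] <;> intros <;>
    first
      | omega
      | trivial
      | (rw [Nat.add_sub_cancel' (by omega)])
      | (rw [Nat.add_sub_cancel_left])

theorem aux_tri_comm {M : Type*} [AddCommMonoid M] (m : ℕ) (f : ℕ → ℕ → M) :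
    ∑ j ∈ range (m+1), ∑ p ∈ range (m + 1 - j), f j p
      = ∑ p ∈ range (m+1), ∑ j ∈ range (m + 1 - p), f j p := by
  rw [Finset.sum_sigma', Finset.sum_sigma']
  refine Finset.sum_nbij'
    (fun x : (_ : ℕ) × ℕ => (⟨x.2, x.1⟩ : (_ : ℕ) × ℕ))
    (fun x : (_ : ℕ) × ℕ => (⟨x.2, x.1⟩ : (_ : ℕ) × ℕ)) ?_ ?_ ?_ ?_ ?_ <;>
    simp only [Finset.mem_sigma, Finset.mem_range, Sigma.forall] <;> intros <;>
    first | omega | trivial | rfl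

theorem aux_choose3 {m j k : ℕ} (h : j + k ≤ m) :
    m.choose j * (m - j).choose k = m.choose k * (m - k).choose j := by
  have h1 := Nat.choose_mul (n := m) (show j ≤ j + k by omega)
  have h2 := Nat.choose_mul (n := m) (show k ≤ j + k by omega)
  have h3 : (j + k).choose j = (j + k).choose k := by
    rw [← Nat.choose_symm (show k ≤ j + k by omega), Nat.add_sub_cancel]
  rw [Nat.add_sub_cancel_left] at h1
  rw [Nat.add_sub_cancel] at h2
  rw [← h1, ← h2, h3]

theorem aux_choose3' {m j k : ℕ} (h : j + k ≤ m) :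
    m.choose j * (m - j).choose k = m.choose (m - j - k) * (m - (m - j - k)).choose j := by
  have e1 : m - (m - j - k) = j + k := by omega
  have e2 : m - j - k = m - (j + k) := by omega
  rw [e1, e2, Nat.choose_symm h]
  have h1 := Nat.choose_mul (n := m) (show j ≤ j + k by omega)
  rw [Nat.add_sub_cancel_left] at h1
  exact h1.symm

theorem aux_trisum {R M : Type*} [Semiring R] [AddCommMonoid M] [Module R M] (m : ℕ)
    (F : ℕ → ℕ → ℕ → M) :
    ∑ j ∈ range (m+1), ∑ k ∈ range (m+1-j),
        ((m.choose j * (m-j).choose k : ℕ) : R) • F j k (m-j-k)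
    = ∑ l ∈ range (m+1), ∑ j ∈ range (m+1-l),
        ((m.choose l * (m-l).choose j : ℕ) : R) • F j (m-l-j) l := by
  rw [Finset.sum_sigma', Finset.sum_sigma']
  refine Finset.sum_nbij'
    (fun x : (_ : ℕ) × ℕ => (⟨m - x.1 - x.2, x.1⟩ : (_ : ℕ) × ℕ))
    (fun x : (_ : ℕ) × ℕ => (⟨x.2, m - x.1 - x.2⟩ : (_ : ℕ) × ℕ)) ?_ ?_ ?_ ?_ ?_ <;>
    simp only [Finset.mem_sigma, Finset.mem_range, Sigma.forall] <;> intro j k hjk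
  · omega
  · omega
  · have e1 : m - (m - j - k) - j = k := by omega
    rw [e1]
  · have e1 : m - k - (m - j - k) = j := by omega
    rw [e1]
  · have e1 : m - (m - j - k) - j = k := by omega
    rw [e1, aux_choose3' (show j + k ≤ m by omega)]

theorem aux_binom_step {R M : Type*} [Semiring R] [AddCommMonoid M] [Module R M]
    (m : ℕ) (G : ℕ → ℕ → M) :
    (∑ j ∈ range (m+1), (m.choose j : R) • G (j+1) (m - j))
      + ∑ j ∈ range (m+1), (m.choose j : R) • G j (m + 1 - j)
    = ∑ j ∈ range (m+2), ((m+1).choose j : R) • G j (m+1-j) := by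
  have hR : ∑ j ∈ range (m+2), ((m+1).choose j : R) • G j (m+1-j)
      = (∑ j ∈ range (m+1), (m.choose j : R) • G (j+1) (m - j))
        + ((∑ j ∈ range (m+1), (m.choose (j+1) : R) • G (j+1) (m - j)) + G 0 (m+1)) := by
    rw [Finset.sum_range_succ' (fun j => ((m+1).choose j : R) • G j (m+1-j)) (m+1)]
    have e : ∀ j ∈ range (m+1), ((m+1).choose (j+1) : R) • G (j+1) (m+1-(j+1))
        = (m.choose j : R) • G (j+1) (m-j) + (m.choose (j+1) : R) • G (j+1) (m-j) := by
      intro j _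
      rw [Nat.choose_succ_succ, Nat.cast_add, add_smul, Nat.succ_sub_succ]
    rw [Finset.sum_congr rfl e, Finset.sum_add_distrib]
    simp only [Nat.choose_zero_right, Nat.cast_one, one_smul, Nat.sub_zero]
    abel
  have hL : ∑ j ∈ range (m+1), (m.choose j : R) • G j (m+1-j)
      = (∑ j ∈ range (m+1), (m.choose (j+1) : R) • G (j+1) (m-j)) + G 0 (m+1) := by
    rw [Finset.sum_range_succ' (fun j => ((m.choose j : R)) • G j (m+1-j)) m]
    rw [Finset.sum_range_succ (fun j => ((m.choose (j+1) : R)) • G (j+1) (m-j)) m]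
    simp only [Nat.succ_sub_succ, Nat.choose_succ_self, Nat.cast_zero, zero_smul, add_zero,
      Nat.choose_zero_right, Nat.cast_one, one_smul, Nat.sub_zero]
  rw [hR, hL]

/-! ### Basic facts about generators, powers, coproduct and counit -/

theorem lpow_zero' (a : F2 K) : lpow K a 0 = 1 := rfl

theorem lpow_one' (a : F2 K) : lpow K a 1 = a := one_mul a

theorem hdeltaX (Δ : F2 K →ₗ[K] F2 K ⊗[K] F2 K)
    (hΔmul : ∀ u v, Δ (u * v) = Δ u * Δ v)
    (hΔone : Δ 1 = 1 ⊗ₜ[K] 1)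
    (hΔgen : ∀ i, Δ (gen2 K i) = gen2 K i ⊗ₜ[K] 1 + 1 ⊗ₜ[K] gen2 K i) :
    ∀ m, Δ (lpow K (gen2 K 0) m) = ∑ j ∈ range (m+1),
    (m.choose j : K) • (lpow K (gen2 K 0) j ⊗ₜ[K] lpow K (gen2 K 0) (m - j)) := by
  intro m
  set x := gen2 K 0 with hx
  set X := lpow K (gen2 K 0) with hX
  induction m with
  | zero => simpa [hX, lpow_zero'] using hΔone
  | succ m ih =>
    have h0 : Δ (X (m+1)) = Δ (X m) * Δ x := hΔmul (X m) x
    rw [h0, ih, hΔgen 0, ← hx]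
    rw [Finset.sum_mul]
    simp only [smul_mul_assoc, mul_add, Algebra.TensorProduct.tmul_mul_tmul, mul_one]
    have e1 : ∀ j ∈ range (m+1),
        ((m.choose j : K) • ((X j * x) ⊗ₜ[K] X (m-j)) + (m.choose j : K) • (X j ⊗ₜ[K] (X (m-j) * x)))
        = (m.choose j : K) • ((X (j+1)) ⊗ₜ[K] X (m-j)) + (m.choose j : K) • (X j ⊗ₜ[K] X (m+1-j)) := by
      intro j hj
      have h2 : m + 1 - j = (m - j) + 1 := by simp only [mem_range] at hj; omega
      rw [h2]; rfl
    rw [Finset.sum_congr rfl e1, Finset.sum_add_distrib]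
    exact aux_binom_step m (fun a b => X a ⊗ₜ[K] X b)

theorem hepsX (ε : F2 K →ₗ[K] K)
    (hεmul : ∀ u v, ε (u * v) = ε u * ε v)
    (hεone : ε 1 = 1)
    (hεgen : ∀ i, ε (gen2 K i) = 0) :
    ∀ m, ε (lpow K (gen2 K 0) m) = if m = 0 then 1 else 0 := by
  intro m
  induction m with
  | zero => simpa [lpow_zero'] using hεone
  | succ m _ =>
    have h0 : ε (lpow K (gen2 K 0) (m+1)) = ε (lpow K (gen2 K 0) m) * ε (gen2 K 0) :=
      hεmul (lpow K (gen2 K 0) m) (gen2 K 0)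
    rw [h0, hεgen 0, mul_zero, if_neg (Nat.succ_ne_zero m)]

theorem collapse2 (Δ : F2 K →ₗ[K] F2 K ⊗[K] F2 K) (ε : F2 K →ₗ[K] K)
    (ldiv : F2 K →ₗ[K] F2 K →ₗ[K] F2 K)
    (hΔmul : ∀ u v, Δ (u * v) = Δ u * Δ v)
    (hΔone : Δ 1 = 1 ⊗ₜ[K] 1)
    (hΔgen : ∀ i, Δ (gen2 K i) = gen2 K i ⊗ₜ[K] 1 + 1 ⊗ₜ[K] gen2 K i)
    (hεmul : ∀ u v, ε (u * v) = ε u * ε v)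
    (hεone : ε 1 = 1)
    (hεgen : ∀ i, ε (gen2 K i) = 0)
    (hldiv₂ : ∀ u v, TensorProduct.lift
        ((LinearMap.mul K (F2 K)).compl₂ (ldiv.flip v)) (Δ u) = ε u • v)
    (m : ℕ) (v : F2 K) :
    ∑ j ∈ range (m+1), (m.choose j : K) •
      (lpow K (gen2 K 0) j * ldiv (lpow K (gen2 K 0) (m-j)) v) = if m = 0 then v else 0 := by
  have h := hldiv₂ (lpow K (gen2 K 0) m) v
  rw [hdeltaX K Δ hΔmul hΔone hΔgen m, map_sum] at h
  simp only [map_smul, TensorProduct.lift.tmul, LinearMap.compl₂_apply, LinearMap.flip_apply,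
    LinearMap.mul_apply'] at h
  rw [hepsX K ε hεmul hεone hεgen m, ite_smul, one_smul, zero_smul] at h
  exact h

theorem brXlem (Δ : F2 K →ₗ[K] F2 K ⊗[K] F2 K)
    (hΔmul : ∀ u v, Δ (u * v) = Δ u * Δ v)
    (hΔone : Δ 1 = 1 ⊗ₜ[K] 1)
    (hΔgen : ∀ i, Δ (gen2 K i) = gen2 K i ⊗ₜ[K] 1 + 1 ⊗ₜ[K] gen2 K i)
    (br : F2 K →ₗ[K] F2 K →ₗ[K] F2 K →ₗ[K] F2 K)
    (hbr : ∀ w a b, (w * a) * b - (w * b) * a =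
      -(TensorProduct.lift
          ((LinearMap.mul K (F2 K)).compl₂ ((br.flip a).flip b)) (Δ w)))
    (p : ℕ) (a b : F2 K) :
    (lpow K (gen2 K 0) p * a) * b - (lpow K (gen2 K 0) p * b) * a
      = -∑ j ∈ range (p+1), (p.choose j : K) •
          (lpow K (gen2 K 0) j * br (lpow K (gen2 K 0) (p-j)) a b) := by
  have h := hbr (lpow K (gen2 K 0) p) a b
  rw [hdeltaX K Δ hΔmul hΔone hΔgen p, map_sum] at h
  simp only [map_smul, TensorProduct.lift.tmul, LinearMap.compl₂_apply, LinearMap.flip_apply,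
    LinearMap.mul_apply'] at h
  exact h

theorem ldiv_one (Δ : F2 K →ₗ[K] F2 K ⊗[K] F2 K) (ε : F2 K →ₗ[K] K)
    (ldiv : F2 K →ₗ[K] F2 K →ₗ[K] F2 K)
    (hΔone : Δ 1 = 1 ⊗ₜ[K] 1)
    (hεone : ε 1 = 1)
    (hldiv₂ : ∀ u v, TensorProduct.lift
        ((LinearMap.mul K (F2 K)).compl₂ (ldiv.flip v)) (Δ u) = ε u • v)
    (v : F2 K) : ldiv 1 v = v := by
  have h := hldiv₂ 1 v
  rw [hΔone, TensorProduct.lift.tmul] at h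
  simp only [LinearMap.compl₂_apply, LinearMap.flip_apply, LinearMap.mul_apply', one_mul,
    hεone, one_smul] at h
  exact h

/-- `g m = Σ_j C(m,j) xʲ \ D(x^{m-j})`, i.e. `m!` times the degree-`m` part of `γ_D(exp x)`. -/
def gf (ldiv : F2 K →ₗ[K] F2 K →ₗ[K] F2 K) (D : F2 K →ₗ[K] F2 K) (m : ℕ) : F2 K :=
  ∑ j ∈ range (m+1), (m.choose j : K) •
    ldiv (lpow K (gen2 K 0) j) (D (lpow K (gen2 K 0) (m-j)))

/-- `h q = δ_{q,0}·y − Σ_b C(q,b) ⟨x^{q-b}; g_b, x⟩`. -/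
def hfn (ldiv : F2 K →ₗ[K] F2 K →ₗ[K] F2 K) (D : F2 K →ₗ[K] F2 K)
    (br : F2 K →ₗ[K] F2 K →ₗ[K] F2 K →ₗ[K] F2 K) (q : ℕ) : F2 K :=
  (if q = 0 then gen2 K 1 else 0)
    - ∑ b ∈ range (q+1), (q.choose b : K) •
        br (lpow K (gen2 K 0) (q-b)) (gf K ldiv D b) (gen2 K 0)

theorem gammaD_eq (Δ : F2 K →ₗ[K] F2 K ⊗[K] F2 K)
    (hΔmul : ∀ u v, Δ (u * v) = Δ u * Δ v)
    (hΔone : Δ 1 = 1 ⊗ₜ[K] 1)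
    (hΔgen : ∀ i, Δ (gen2 K i) = gen2 K i ⊗ₜ[K] 1 + 1 ⊗ₜ[K] gen2 K i)
    (ldiv : F2 K →ₗ[K] F2 K →ₗ[K] F2 K) (D : F2 K →ₗ[K] F2 K) (m : ℕ) :
    gammaD K Δ ldiv D (lpow K (gen2 K 0) m) = gf K ldiv D m := by
  unfold gammaD gf
  rw [LinearMap.comp_apply, hdeltaX K Δ hΔmul hΔone hΔgen m, map_sum]
  refine Finset.sum_congr rfl fun j hj => ?_
  rw [map_smul, TensorProduct.lift.tmul, LinearMap.compl₂_apply]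

theorem D_one (D : F2 K →ₗ[K] F2 K)
    (hD : ∀ u v, D (u * v) = D u * v + u * D v) : D 1 = 0 := by
  have h := hD 1 1
  simp only [mul_one, one_mul] at h
  exact (left_eq_add.mp h)

theorem gf_zero (ldiv : F2 K →ₗ[K] F2 K →ₗ[K] F2 K) (D : F2 K →ₗ[K] F2 K)
    (hD : ∀ u v, D (u * v) = D u * v + u * D v) :
    gf K ldiv D 0 = 0 := by
  unfold gf
  rw [Finset.sum_range_one]
  rw [show lpow K (gen2 K 0) (0-0) = (1 : F2 K) from rfl, D_one K D hD, map_zero, smul_zero]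

theorem gf_one (Δ : F2 K →ₗ[K] F2 K ⊗[K] F2 K) (ε : F2 K →ₗ[K] K)
    (ldiv : F2 K →ₗ[K] F2 K →ₗ[K] F2 K) (D : F2 K →ₗ[K] F2 K)
    (hΔone : Δ 1 = 1 ⊗ₜ[K] 1)
    (hεone : ε 1 = 1)
    (hldiv₂ : ∀ u v, TensorProduct.lift
        ((LinearMap.mul K (F2 K)).compl₂ (ldiv.flip v)) (Δ u) = ε u • v)
    (hD : ∀ u v, D (u * v) = D u * v + u * D v)
    (hDx : D (gen2 K 0) = gen2 K 1) :
    gf K ldiv D 1 = gen2 K 1 := by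
  unfold gf
  rw [Finset.sum_range_succ, Finset.sum_range_one]
  rw [show (1:ℕ) - 1 = 0 from rfl, show (1:ℕ) - 0 = 1 from rfl]
  rw [show lpow K (gen2 K 0) 0 = (1 : F2 K) from rfl, lpow_one']
  rw [D_one K D hD, map_zero, smul_zero, add_zero, hDx,
    ldiv_one K Δ ε ldiv hΔone hεone hldiv₂]
  simp

theorem sumA (Δ : F2 K →ₗ[K] F2 K ⊗[K] F2 K) (ε : F2 K →ₗ[K] K)
    (ldiv : F2 K →ₗ[K] F2 K →ₗ[K] F2 K)
    (hΔmul : ∀ u v, Δ (u * v) = Δ u * Δ v)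
    (hΔone : Δ 1 = 1 ⊗ₜ[K] 1)
    (hΔgen : ∀ i, Δ (gen2 K i) = gen2 K i ⊗ₜ[K] 1 + 1 ⊗ₜ[K] gen2 K i)
    (hεmul : ∀ u v, ε (u * v) = ε u * ε v)
    (hεone : ε 1 = 1)
    (hεgen : ∀ i, ε (gen2 K i) = 0)
    (hldiv₂ : ∀ u v, TensorProduct.lift
        ((LinearMap.mul K (F2 K)).compl₂ (ldiv.flip v)) (Δ u) = ε u • v)
    (D : F2 K →ₗ[K] F2 K) (m : ℕ) :
    ∑ j ∈ range (m+1), (m.choose j : K) •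
        (lpow K (gen2 K 0) j * gf K ldiv D (m-j)) = D (lpow K (gen2 K 0) m) := by
  have step1 : ∀ j ∈ range (m+1), (m.choose j : K) • (lpow K (gen2 K 0) j * gf K ldiv D (m-j))
      = ∑ k ∈ range (m+1-j), ((m.choose j * (m-j).choose k : ℕ) : K) •
          (lpow K (gen2 K 0) j * ldiv (lpow K (gen2 K 0) k) (D (lpow K (gen2 K 0) (m-j-k)))) := by
    intro j hj
    rw [mem_range] at hj
    unfold gf
    rw [Finset.mul_sum, Finset.smul_sum, show m+1-j = (m-j)+1 by omega]
    refine Finset.sum_congr rfl fun k hk => ?_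
    rw [mul_smul_comm, smul_smul, ← Nat.cast_mul]
  rw [Finset.sum_congr rfl step1,
    aux_trisum m (fun j k l => lpow K (gen2 K 0) j * ldiv (lpow K (gen2 K 0) k) (D (lpow K (gen2 K 0) l)))]
  have step2 : ∀ l ∈ range (m+1),
      ∑ j ∈ range (m+1-l), ((m.choose l * (m-l).choose j : ℕ) : K) •
        (lpow K (gen2 K 0) j * ldiv (lpow K (gen2 K 0) (m-l-j)) (D (lpow K (gen2 K 0) l)))
      = (m.choose l : K) • (if m - l = 0 then D (lpow K (gen2 K 0) l) else 0) := by
    intro l hl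
    rw [mem_range] at hl
    rw [← collapse2 K Δ ε ldiv hΔmul hΔone hΔgen hεmul hεone hεgen hldiv₂ (m-l)
      (D (lpow K (gen2 K 0) l))]
    rw [Finset.smul_sum, show m+1-l = (m-l)+1 by omega]
    refine Finset.sum_congr rfl fun j hj => ?_
    rw [smul_smul, ← Nat.cast_mul]
  rw [Finset.sum_congr rfl step2]
  rw [Finset.sum_eq_single m]
  · simp
  · intro l hl hne
    rw [mem_range] at hl
    rw [if_neg (by omega), smul_zero]
  · intro h; exact absurd (self_mem_range_succ m) h

theorem E1lem (Δ : F2 K →ₗ[K] F2 K ⊗[K] F2 K) (ε : F2 K →ₗ[K] K)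
    (ldiv : F2 K →ₗ[K] F2 K →ₗ[K] F2 K)
    (hΔmul : ∀ u v, Δ (u * v) = Δ u * Δ v)
    (hΔone : Δ 1 = 1 ⊗ₜ[K] 1)
    (hΔgen : ∀ i, Δ (gen2 K i) = gen2 K i ⊗ₜ[K] 1 + 1 ⊗ₜ[K] gen2 K i)
    (hεmul : ∀ u v, ε (u * v) = ε u * ε v)
    (hεone : ε 1 = 1)
    (hεgen : ∀ i, ε (gen2 K i) = 0)
    (hldiv₂ : ∀ u v, TensorProduct.lift
        ((LinearMap.mul K (F2 K)).compl₂ (ldiv.flip v)) (Δ u) = ε u • v)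
    (br : F2 K →ₗ[K] F2 K →ₗ[K] F2 K →ₗ[K] F2 K)
    (hbr : ∀ w a b, (w * a) * b - (w * b) * a =
      -(TensorProduct.lift
          ((LinearMap.mul K (F2 K)).compl₂ ((br.flip a).flip b)) (Δ w)))
    (D : F2 K →ₗ[K] F2 K)
    (hD : ∀ u v, D (u * v) = D u * v + u * D v)
    (hDx : D (gen2 K 0) = gen2 K 1)
    (m : ℕ) :
    ∑ a ∈ range (m+1), (m.choose a : K) • (lpow K (gen2 K 0) a * gf K ldiv D (m+1-a))
      = ∑ j ∈ range (m+1), (m.choose j : K) • (lpow K (gen2 K 0) j * hfn K ldiv D br (m-j)) := by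
  have hsumA := sumA K Δ ε ldiv hΔmul hΔone hΔgen hεmul hεone hεgen hldiv₂ D
  have hbrX := brXlem K Δ hΔmul hΔone hΔgen br hbr
  set x := gen2 K 0 with hx
  set y := gen2 K 1 with hy
  set X := lpow K (gen2 K 0) with hX
  have h1 : (∑ j ∈ range (m+1), (m.choose j : K) • (X (j+1) * gf K ldiv D (m-j)))
      + ∑ a ∈ range (m+1), (m.choose a : K) • (X a * gf K ldiv D (m+1-a))
      = D (X (m+1)) := by
    rw [aux_binom_step m (fun a b => X a * gf K ldiv D b)]
    exact hsumA (m+1)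
  have h2 : D (X (m+1))
      = (∑ a ∈ range (m+1), (m.choose a : K) • ((X a * gf K ldiv D (m-a)) * x)) + X m * y := by
    have hd : D (X (m+1)) = D (X m) * x + X m * y := by
      rw [show X (m+1) = X m * x from rfl, hD, hDx]
    rw [hd, ← hsumA m, Finset.sum_mul]
    congr 1
    exact Finset.sum_congr rfl fun a _ => smul_mul_assoc _ _ _
  have h3 : ∑ a ∈ range (m+1), (m.choose a : K) • (X a * gf K ldiv D (m+1-a))
      = ((∑ a ∈ range (m+1), (m.choose a : K) • ((X a * gf K ldiv D (m-a)) * x)) + X m * y)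
        - ∑ j ∈ range (m+1), (m.choose j : K) • (X (j+1) * gf K ldiv D (m-j)) := by
    rw [← h2]
    exact eq_sub_of_add_eq' h1
  have h4 : ∑ a ∈ range (m+1), (m.choose a : K) • (X a * gf K ldiv D (m+1-a))
      = (∑ a ∈ range (m+1), (m.choose a : K)
          • ((X a * gf K ldiv D (m-a)) * x - (X a * x) * gf K ldiv D (m-a))) + X m * y := by
    rw [h3, add_sub_right_comm]
    congr 1
    rw [← Finset.sum_sub_distrib]
    exact Finset.sum_congr rfl fun a _ => by rw [← smul_sub]; rfl
  have h5 : ∑ a ∈ range (m+1), (m.choose a : K) • (X a * gf K ldiv D (m+1-a))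
      = (-∑ a ∈ range (m+1), (m.choose a : K)
          • ∑ j ∈ range (a+1), (a.choose j : K) • (X j * br (X (a-j)) (gf K ldiv D (m-a)) x))
        + X m * y := by
    rw [h4]
    congr 1
    rw [← Finset.sum_neg_distrib]
    exact Finset.sum_congr rfl fun a _ => by
      rw [hbrX a (gf K ldiv D (m-a)) x, smul_neg]
  have key : ∑ a ∈ range (m+1), (m.choose a : K)
        • ∑ j ∈ range (a+1), (a.choose j : K) • (X j * br (X (a-j)) (gf K ldiv D (m-a)) x)
      = ∑ j ∈ range (m+1), ∑ b ∈ range (m+1-j), ((m.choose j * (m-j).choose b : ℕ) : K)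
          • (X j * br (X (m-j-b)) (gf K ldiv D b) x) := by
    have sA : ∀ a ∈ range (m+1), (m.choose a : K)
        • ∑ j ∈ range (a+1), (a.choose j : K) • (X j * br (X (a-j)) (gf K ldiv D (m-a)) x)
        = ∑ j ∈ range (a+1), ((m.choose j * (m-j).choose (a-j) : ℕ) : K)
            • (X j * br (X (a-j)) (gf K ldiv D (m-j-(a-j))) x) := by
      intro a ha
      rw [mem_range] at ha
      rw [Finset.smul_sum]
      refine Finset.sum_congr rfl fun j hj => ?_
      rw [mem_range] at hj
      rw [show m - a = m-j-(a-j) by omega, smul_smul, ← Nat.cast_mul,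
        Nat.choose_mul (n := m) (show j ≤ a by omega)]
    rw [Finset.sum_congr rfl sA,
      aux_tri_diag m (fun j p => ((m.choose j * (m-j).choose p : ℕ) : K)
        • (X j * br (X p) (gf K ldiv D (m-j-p)) x)),
      aux_tri_comm m (fun j p => ((m.choose j * (m-j).choose p : ℕ) : K)
        • (X j * br (X p) (gf K ldiv D (m-j-p)) x))]
    have sB : ∀ p ∈ range (m+1),
        (∑ j ∈ range (m+1-p), ((m.choose j * (m-j).choose p : ℕ) : K)
          • (X j * br (X p) (gf K ldiv D (m-j-p)) x))
        = ∑ j ∈ range (m+1-p), ((m.choose p * (m-p).choose j : ℕ) : K)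
            • (X j * br (X p) (gf K ldiv D (m-p-j)) x) := by
      intro p hp
      rw [mem_range] at hp
      refine Finset.sum_congr rfl fun j hj => ?_
      rw [mem_range] at hj
      rw [show m-j-p = m-p-j by omega, aux_choose3 (show j + p ≤ m by omega)]
    rw [Finset.sum_congr rfl sB,
      ← aux_trisum m (fun j k l => X j * br (X l) (gf K ldiv D k) x)]
  have hR : ∀ j ∈ range (m+1), (m.choose j : K) • (X j * hfn K ldiv D br (m-j))
      = (if j = m then X m * y else 0)
        - ∑ b ∈ range (m+1-j), ((m.choose j * (m-j).choose b : ℕ) : K)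
            • (X j * br (X (m-j-b)) (gf K ldiv D b) x) := by
    intro j hj
    rw [mem_range] at hj
    unfold hfn
    rw [← hx, ← hy, ← hX, mul_sub, smul_sub]
    congr 1
    · by_cases hjm : j = m
      · rw [hjm]; simp
      · rw [if_neg (by omega : ¬(m - j = 0)), if_neg hjm, mul_zero, smul_zero]
    · rw [Finset.mul_sum, Finset.smul_sum, show m+1-j = (m-j)+1 by omega]
      refine Finset.sum_congr rfl fun b hb => ?_
      rw [mul_smul_comm, smul_smul, ← Nat.cast_mul]
  rw [Finset.sum_congr rfl hR, Finset.sum_sub_distrib,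
    Finset.sum_ite_eq' (range (m+1)) m (fun _ => X m * y), if_pos (self_mem_range_succ m),
    h5, key]
  abel

theorem main_g (Δ : F2 K →ₗ[K] F2 K ⊗[K] F2 K) (ε : F2 K →ₗ[K] K)
    (ldiv : F2 K →ₗ[K] F2 K →ₗ[K] F2 K)
    (hΔmul : ∀ u v, Δ (u * v) = Δ u * Δ v)
    (hΔone : Δ 1 = 1 ⊗ₜ[K] 1)
    (hΔgen : ∀ i, Δ (gen2 K i) = gen2 K i ⊗ₜ[K] 1 + 1 ⊗ₜ[K] gen2 K i)
    (hεmul : ∀ u v, ε (u * v) = ε u * ε v)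
    (hεone : ε 1 = 1)
    (hεgen : ∀ i, ε (gen2 K i) = 0)
    (hldiv₂ : ∀ u v, TensorProduct.lift
        ((LinearMap.mul K (F2 K)).compl₂ (ldiv.flip v)) (Δ u) = ε u • v)
    (br : F2 K →ₗ[K] F2 K →ₗ[K] F2 K →ₗ[K] F2 K)
    (hbr : ∀ w a b, (w * a) * b - (w * b) * a =
      -(TensorProduct.lift
          ((LinearMap.mul K (F2 K)).compl₂ ((br.flip a).flip b)) (Δ w)))
    (D : F2 K →ₗ[K] F2 K)
    (hD : ∀ u v, D (u * v) = D u * v + u * D v)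
    (hDx : D (gen2 K 0) = gen2 K 1) :
    ∀ q, gf K ldiv D (q+1) = hfn K ldiv D br q := by
  intro q
  induction q using Nat.strong_induction_on with
  | _ q IH =>
    have h := E1lem K Δ ε ldiv hΔmul hΔone hΔgen hεmul hεone hεgen hldiv₂ br hbr D hD hDx q
    rw [Finset.sum_range_succ'
        (fun a => (q.choose a : K) • (lpow K (gen2 K 0) a * gf K ldiv D (q+1-a))) q,
      Finset.sum_range_succ'
        (fun a => (q.choose a : K) • (lpow K (gen2 K 0) a * hfn K ldiv D br (q-a))) q] at h
    have e : ∀ a ∈ range q,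
        (q.choose (a+1) : K) • (lpow K (gen2 K 0) (a+1) * gf K ldiv D (q+1-(a+1)))
        = (q.choose (a+1) : K) • (lpow K (gen2 K 0) (a+1) * hfn K ldiv D br (q-(a+1))) := by
      intro a ha
      rw [mem_range] at ha
      rw [show q+1-(a+1) = (q-(a+1))+1 by omega, IH (q-(a+1)) (by omega)]
    rw [Finset.sum_congr rfl e] at h
    have h' := add_left_cancel h
    simpa [lpow_zero'] using h'

theorem br_antisym (Δ : F2 K →ₗ[K] F2 K ⊗[K] F2 K)
    (hΔmul : ∀ u v, Δ (u * v) = Δ u * Δ v)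
    (hΔone : Δ 1 = 1 ⊗ₜ[K] 1)
    (hΔgen : ∀ i, Δ (gen2 K i) = gen2 K i ⊗ₜ[K] 1 + 1 ⊗ₜ[K] gen2 K i)
    (br : F2 K →ₗ[K] F2 K →ₗ[K] F2 K →ₗ[K] F2 K)
    (hbr : ∀ w a b, (w * a) * b - (w * b) * a =
      -(TensorProduct.lift
          ((LinearMap.mul K (F2 K)).compl₂ ((br.flip a).flip b)) (Δ w))) :
    ∀ p a b, br (lpow K (gen2 K 0) p) a b = - br (lpow K (gen2 K 0) p) b a := by
  intro p
  induction p using Nat.strong_induction_on with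
  | _ p IH =>
    intro a b
    have h1 := brXlem K Δ hΔmul hΔone hΔgen br hbr p a b
    have h2 := brXlem K Δ hΔmul hΔone hΔgen br hbr p b a
    have h4 : -(∑ j ∈ range (p+1), (p.choose j : K) •
          (lpow K (gen2 K 0) j * br (lpow K (gen2 K 0) (p-j)) a b))
        + -(∑ j ∈ range (p+1), (p.choose j : K) •
          (lpow K (gen2 K 0) j * br (lpow K (gen2 K 0) (p-j)) b a)) = 0 := by
      rw [← h1, ← h2]; abel
    rw [← neg_add] at h4
    have h3 := neg_eq_zero.mp h4
    rw [← Finset.sum_add_distrib] at h3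
    have e : ∀ j ∈ range (p+1),
        ((p.choose j : K) • (lpow K (gen2 K 0) j * br (lpow K (gen2 K 0) (p-j)) a b)
          + (p.choose j : K) • (lpow K (gen2 K 0) j * br (lpow K (gen2 K 0) (p-j)) b a))
        = (p.choose j : K) • (lpow K (gen2 K 0) j *
            (br (lpow K (gen2 K 0) (p-j)) a b + br (lpow K (gen2 K 0) (p-j)) b a)) := by
      intro j _
      rw [mul_add, smul_add]
    rw [Finset.sum_congr rfl e,
      Finset.sum_range_succ' (fun j => (p.choose j : K) • (lpow K (gen2 K 0) j *
        (br (lpow K (gen2 K 0) (p-j)) a b + br (lpow K (gen2 K 0) (p-j)) b a))) p] at h3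
    have e2 : ∀ j ∈ range p,
        (p.choose (j+1) : K) • (lpow K (gen2 K 0) (j+1) *
          (br (lpow K (gen2 K 0) (p-(j+1))) a b + br (lpow K (gen2 K 0) (p-(j+1))) b a))
        = 0 := by
      intro j hj
      rw [mem_range] at hj
      rw [IH (p-(j+1)) (by omega), neg_add_cancel, mul_zero, smul_zero]
    rw [Finset.sum_congr rfl e2, Finset.sum_const_zero, zero_add] at h3
    simp only [Nat.choose_zero_right, Nat.cast_one, one_smul, Nat.sub_zero, lpow_zero',
      one_mul] at h3
    exact eq_neg_of_add_eq_zero_left h3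

theorem coefeq (n i : ℕ) (h2 : i ≤ n) :
    (((n+1).factorial : K))⁻¹ * (n.choose i : K)
      = ((n:K)+1)⁻¹ * (((n-i).factorial : K))⁻¹ * ((i.factorial : K))⁻¹ := by
  have hn : ((n : K)+1) ≠ 0 := by
    have := Nat.cast_add_one_ne_zero (R := K) n
    simpa using this
  have f1 : (i.factorial : K) ≠ 0 := Nat.cast_ne_zero.mpr (Nat.factorial_ne_zero _)
  have f2 : ((n-i).factorial : K) ≠ 0 := Nat.cast_ne_zero.mpr (Nat.factorial_ne_zero _)
  have f3 : ((n).factorial : K) ≠ 0 := Nat.cast_ne_zero.mpr (Nat.factorial_ne_zero _)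
  rw [Nat.cast_choose K h2, Nat.factorial_succ, Nat.cast_mul]
  push_cast
  field_simp

theorem tau_exp_l_recursion
    (Δ : F2 K →ₗ[K] F2 K ⊗[K] F2 K) (ε : F2 K →ₗ[K] K)
    (ldiv : F2 K →ₗ[K] F2 K →ₗ[K] F2 K)
    (hΔmul : ∀ u v, Δ (u * v) = Δ u * Δ v)
    (hΔone : Δ 1 = 1 ⊗ₜ[K] 1)
    (hΔgen : ∀ i, Δ (gen2 K i) = gen2 K i ⊗ₜ[K] 1 + 1 ⊗ₜ[K] gen2 K i)
    (hεmul : ∀ u v, ε (u * v) = ε u * ε v)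
    (hεone : ε 1 = 1)
    (hεgen : ∀ i, ε (gen2 K i) = 0)
    (hldiv₁ : ∀ u v, TensorProduct.lift
        (ldiv.compl₂ ((LinearMap.mul K (F2 K)).flip v)) (Δ u) = ε u • v)
    (hldiv₂ : ∀ u v, TensorProduct.lift
        ((LinearMap.mul K (F2 K)).compl₂ (ldiv.flip v)) (Δ u) = ε u • v)
    -- the Shestakov–Umirbaev bracket ⟨w; a, b⟩
    (br : F2 K →ₗ[K] F2 K →ₗ[K] F2 K →ₗ[K] F2 K)
    (hbr : ∀ w a b, (w * a) * b - (w * b) * a =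
      -(TensorProduct.lift
          ((LinearMap.mul K (F2 K)).compl₂ ((br.flip a).flip b)) (Δ w)))
    -- the derivation y∂_x
    (D : F2 K →ₗ[K] F2 K)
    (hD : ∀ u v, D (u * v) = D u * v + u * D v)
    (hDx : D (gen2 K 0) = gen2 K 1) (hDy : D (gen2 K 1) = 0)
    -- τ_n, the degree-n component of τ^{exp_l(x)}(y) = γ_{y∂_x}(exp_l(x))
    (τ : ℕ → F2 K)
    (hτ0 : τ 0 = gen2 K 1)
    (hτ : ∀ n, 1 ≤ n → τ n =
      ((n + 1).factorial : K)⁻¹ •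
        gammaD K Δ ldiv D (lpow K (gen2 K 0) (n + 1))) :
    (∀ n, 1 ≤ n → τ n =
        ∑ i ∈ Finset.Icc 1 n,
          (((n : K) + 1)⁻¹ * (((n - i).factorial : K))⁻¹) •
            br (lpow K (gen2 K 0) (n - i)) (gen2 K 0) (τ (i - 1))) ∧
      τ 1 = (2 : K)⁻¹ • br 1 (gen2 K 0) (gen2 K 1) ∧
      τ 1 = -((2 : K)⁻¹) •
        (gen2 K 0 * gen2 K 1 - gen2 K 1 * gen2 K 0) := by
  have hτg : ∀ b, τ b = (((b+1).factorial : K))⁻¹ • gf K ldiv D (b+1) := by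
    intro b
    cases b with
    | zero =>
      rw [hτ0, gf_one K Δ ε ldiv D hΔone hεone hldiv₂ hD hDx]
      simp
    | succ b =>
      rw [hτ (b+1) (by omega), gammaD_eq K Δ hΔmul hΔone hΔgen ldiv D (b+1+1)]
  have hanti := br_antisym K Δ hΔmul hΔone hΔgen br hbr
  have part1 : ∀ n, 1 ≤ n → τ n =
      ∑ i ∈ Finset.Icc 1 n,
        (((n : K) + 1)⁻¹ * (((n - i).factorial : K))⁻¹) •
          br (lpow K (gen2 K 0) (n - i)) (gen2 K 0) (τ (i - 1)) := by
    intro n hn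
    rw [hτg n, main_g K Δ ε ldiv hΔmul hΔone hΔgen hεmul hεone hεgen hldiv₂ br hbr D hD hDx n]
    rw [show hfn K ldiv D br n = -∑ b ∈ range (n+1), (n.choose b : K) •
        br (lpow K (gen2 K 0) (n-b)) (gf K ldiv D b) (gen2 K 0) from by
      unfold hfn; rw [if_neg (by omega), zero_sub]]
    rw [smul_neg, Finset.smul_sum, ← Finset.sum_neg_distrib]
    have e1 : ∀ b ∈ range (n+1),
        -((((n+1).factorial : K))⁻¹ • ((n.choose b : K) •
          br (lpow K (gen2 K 0) (n-b)) (gf K ldiv D b) (gen2 K 0)))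
        = ((((n+1).factorial : K))⁻¹ * (n.choose b : K)) •
            br (lpow K (gen2 K 0) (n-b)) (gen2 K 0) (gf K ldiv D b) := by
      intro b hb
      rw [hanti (n-b) (gf K ldiv D b) (gen2 K 0), smul_smul, smul_neg, neg_neg]
    rw [Finset.sum_congr rfl e1]
    rw [Finset.sum_range_succ' (fun b => ((((n+1).factorial : K))⁻¹ * (n.choose b : K)) •
        br (lpow K (gen2 K 0) (n-b)) (gen2 K 0) (gf K ldiv D b)) n]
    rw [gf_zero K ldiv D hD]
    simp only [map_zero, smul_zero, add_zero]
    have eIcc : ∑ i ∈ Finset.Icc 1 n,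
        (((n : K) + 1)⁻¹ * (((n - i).factorial : K))⁻¹) •
          br (lpow K (gen2 K 0) (n - i)) (gen2 K 0) (τ (i - 1))
        = ∑ b ∈ range n, (((n : K) + 1)⁻¹ * (((n - (b+1)).factorial : K))⁻¹) •
          br (lpow K (gen2 K 0) (n - (b+1))) (gen2 K 0) (τ b) := by
      refine Finset.sum_nbij' (fun i => i - 1) (fun b => b + 1) ?_ ?_ ?_ ?_ ?_ <;>
        simp only [Finset.mem_Icc, Finset.mem_range] <;> intro i hi <;> try omega
      rw [show i - 1 + 1 = i by omega]
    rw [eIcc]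
    refine Finset.sum_congr rfl fun b hb => ?_
    rw [mem_range] at hb
    rw [hτg b, map_smul, smul_smul, coefeq K n (b+1) (by omega)]
  have part2 : τ 1 = (2 : K)⁻¹ • br 1 (gen2 K 0) (gen2 K 1) := by
    have h := part1 1 le_rfl
    rw [h, Finset.Icc_self, Finset.sum_singleton, hτ0]
    norm_num [lpow_zero']
  have part3 : τ 1 = -((2 : K)⁻¹) •
      (gen2 K 0 * gen2 K 1 - gen2 K 1 * gen2 K 0) := by
    have hb := hbr 1 (gen2 K 0) (gen2 K 1)
    rw [hΔone, TensorProduct.lift.tmul] at hb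
    simp only [LinearMap.compl₂_apply, LinearMap.flip_apply, LinearMap.mul_apply',
      one_mul] at hb
    have hbb : br 1 (gen2 K 0) (gen2 K 1)
        = -(gen2 K 0 * gen2 K 1 - gen2 K 1 * gen2 K 0) := by
      rw [hb, neg_neg]
    rw [part2, hbb, smul_neg, ← neg_smul]
  exact ⟨part1, part2, part3⟩
end
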